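/- Let F be a field, b and n natural numbers with 1 ≤ b ≤ n, and let A_b be the b-dimensional F-vector space with basis e_1,…,e_b on which the symmetric group S_b acts by permuting basis vectors. If the characteristic of F is an odd prime p and 1 < c ≤ b, then the subspace of the c-th exterior power ⋀^c A_b fixed by all elements of S_b is zero; if c = 1, the fixed subspace is the one-dimensional span of e_1 + ⋯ + e_b. -/

import Mathlib

open ExteriorAlgebra

variable (F : Type*) [Field F]

/-- The linear action of a permutation `σ ∈ S_b` on `A_b = F^b`, permuting the basis
vectors: `σ · e_i = e_{σ i}`. -/
noncomputable def permAction (b : ℕ) (σ : Equiv.Perm (Fin b)) :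
    (Fin b → F) →ₗ[F] (Fin b → F) :=
  LinearMap.funLeft F F ⇑σ⁻¹

section Aux

variable {b c : ℕ}

lemma AlternatingMap.sum_apply' {α : Type*} {ι R M N : Type*} [CommSemiring R]
    [AddCommMonoid M] [AddCommMonoid N] [Module R M] [Module R N]
    (s : Finset α) (f : α → M [⋀^ι]→ₗ[R] N) (w : ι → M) :
    (∑ a ∈ s, f a) w = ∑ a ∈ s, f a w := by
  induction s using Finset.cons_induction with
  | empty => rfl
  | cons a s ha ih => simp [Finset.sum_cons, ih]

/-- The coefficient alternating form attached to a `c`-element subset `S` of `Fin b`. -/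
noncomputable def coordAlt (S : {s : Finset (Fin b) // s.card = c}) :
    (Fin b → F) [⋀^Fin c]→ₗ[F] F :=
  (Matrix.detRowAlternating : (Fin c → F) [⋀^Fin c]→ₗ[F] F).compLinearMap
    (LinearMap.funLeft F F fun j => S.1.orderEmbOfFin S.2 j)

lemma coordAlt_apply (S : {s : Finset (Fin b) // s.card = c}) (w : Fin c → (Fin b → F)) :
    coordAlt F S w = Matrix.det (Matrix.of fun k j => w k (S.1.orderEmbOfFin S.2 j)) :=
  rfl

lemma liftAlternating_map_comp (f : ∀ i, (Fin b → F) [⋀^Fin i]→ₗ[F] F)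
    (φ : (Fin b → F) →ₗ[F] (Fin b → F)) (x : ExteriorAlgebra F (Fin b → F)) :
    liftAlternating f (ExteriorAlgebra.map φ x)
      = liftAlternating (fun i => (f i).compLinearMap φ) x := by
  have h : (liftAlternating f) ∘ₗ (ExteriorAlgebra.map φ).toLinearMap
      = liftAlternating (fun i => (f i).compLinearMap φ) := by
    apply ExteriorAlgebra.lhom_ext
    intro i
    ext w
    simp [Function.comp_def]
  exact LinearMap.congr_fun h x

lemma liftAlternating_single_of_mem {x : ExteriorAlgebra F (Fin b → F)}
    (hx : x ∈ ⋀[F]^c (Fin b → F)) (f : ∀ i, (Fin b → F) [⋀^Fin i]→ₗ[F] F) :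
    liftAlternating f x = liftAlternating (Pi.single c (f c)) x := by
  rw [← ιMulti_span_fixedDegree] at hx
  induction hx using Submodule.span_induction with
  | mem y hy => obtain ⟨w, rfl⟩ := hy; simp
  | zero => simp
  | add y z _ _ hy hz => simp only [map_add, hy, hz]
  | smul a y _ hy => simp only [map_smul, smul_eq_mul, hy]

lemma coordAlt_basis (S T : {s : Finset (Fin b) // s.card = c}) :
    coordAlt F S (fun k => Pi.basisFun F (Fin b) (T.1.orderEmbOfFin T.2 k))
      = if S = T then 1 else 0 := by
  rw [coordAlt_apply]
  have hentry : ∀ k j, (Pi.basisFun F (Fin b) (T.1.orderEmbOfFin T.2 k))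
      (S.1.orderEmbOfFin S.2 j)
      = if S.1.orderEmbOfFin S.2 j = T.1.orderEmbOfFin T.2 k then 1 else 0 := by
    intro k j
    simp [Pi.basisFun_apply, Pi.single_apply]
  split_ifs with h
  · subst h
    have : (Matrix.of fun k j => (Pi.basisFun F (Fin b) (S.1.orderEmbOfFin S.2 k))
        (S.1.orderEmbOfFin S.2 j)) = (1 : Matrix (Fin c) (Fin c) F) := by
      ext k j
      rw [Matrix.of_apply, hentry, Matrix.one_apply]
      congr 1
      simp only [eq_iff_iff]
      constructor
      · intro hh
        exact ((S.1.orderEmbOfFin S.2).injective hh).symm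
      · rintro rfl; rfl
    rw [this, Matrix.det_one]
  · have hsub : ¬ T.1 ⊆ S.1 := by
      intro hsub
      exact h (Subtype.ext (Finset.eq_of_subset_of_card_le hsub (by rw [S.2, T.2])).symm)
    obtain ⟨x, hxT, hxS⟩ := Finset.not_subset.mp hsub
    apply Matrix.det_eq_zero_of_row_eq_zero ((T.1.orderIsoOfFin T.2).symm ⟨x, hxT⟩)
    intro j
    rw [Matrix.of_apply, hentry]
    have hx : T.1.orderEmbOfFin T.2 ((T.1.orderIsoOfFin T.2).symm ⟨x, hxT⟩) = x := by
      rw [← Finset.coe_orderIsoOfFin_apply, OrderIso.apply_symm_apply]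
    rw [hx]
    have hne : S.1.orderEmbOfFin S.2 j ≠ x := by
      intro hc
      exact hxS (hc ▸ Finset.orderEmbOfFin_mem S.1 S.2 j)
    simp [hne]

lemma coordAlt_comp_swap (S : {s : Finset (Fin b) // s.card = c}) {i j : Fin b}
    (hi : i ∈ S.1) (hj : j ∈ S.1) (hij : i ≠ j) :
    (coordAlt F S).compLinearMap (permAction F b (Equiv.swap i j)) = - coordAlt F S := by
  ext w
  rw [AlternatingMap.compLinearMap_apply, AlternatingMap.neg_apply, coordAlt_apply,
    coordAlt_apply]
  set a : Fin c := (S.1.orderIsoOfFin S.2).symm ⟨i, hi⟩ with ha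
  set b' : Fin c := (S.1.orderIsoOfFin S.2).symm ⟨j, hj⟩ with hb'
  have hea : S.1.orderEmbOfFin S.2 a = i := by
    rw [ha, ← Finset.coe_orderIsoOfFin_apply, OrderIso.apply_symm_apply]
  have heb : S.1.orderEmbOfFin S.2 b' = j := by
    rw [hb', ← Finset.coe_orderIsoOfFin_apply, OrderIso.apply_symm_apply]
  have hab : a ≠ b' := by
    intro h; apply hij; rw [← hea, ← heb, h]
  have hcol : ∀ l, Equiv.swap i j (S.1.orderEmbOfFin S.2 l)
      = S.1.orderEmbOfFin S.2 (Equiv.swap a b' l) := by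
    intro l
    rcases eq_or_ne l a with rfl | hla
    · rw [hea, Equiv.swap_apply_left, Equiv.swap_apply_left, heb]
    rcases eq_or_ne l b' with rfl | hlb
    · rw [heb, Equiv.swap_apply_right, Equiv.swap_apply_right, hea]
    · rw [Equiv.swap_apply_of_ne_of_ne hla hlb]
      have h1 : S.1.orderEmbOfFin S.2 l ≠ i := fun h =>
        hla ((S.1.orderEmbOfFin S.2).injective (by rw [h, hea]))
      have h2 : S.1.orderEmbOfFin S.2 l ≠ j := fun h =>
        hlb ((S.1.orderEmbOfFin S.2).injective (by rw [h, heb]))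
      rw [Equiv.swap_apply_of_ne_of_ne h1 h2]
  have hmat : (Matrix.of fun k l => (permAction F b (Equiv.swap i j)) (w k)
        (S.1.orderEmbOfFin S.2 l))
      = (Matrix.of fun k l => w k (S.1.orderEmbOfFin S.2 l)).submatrix id
          ⇑(Equiv.swap a b') := by
    ext k l
    show (w k) ((Equiv.swap i j)⁻¹ (S.1.orderEmbOfFin S.2 l))
      = w k (S.1.orderEmbOfFin S.2 (Equiv.swap a b' l))
    rw [Equiv.swap_inv, hcol]
  rw [hmat, Matrix.det_permute', Equiv.Perm.sign_swap hab]
  simp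

lemma alt_expansion (g : (Fin b → F) [⋀^Fin c]→ₗ[F] F) :
    g = ∑ S : {s : Finset (Fin b) // s.card = c},
        g (fun k => Pi.basisFun F (Fin b) (S.1.orderEmbOfFin S.2 k)) • coordAlt F S := by
  refine Module.Basis.ext_alternating (Pi.basisFun F (Fin b)) fun v hv => ?_
  have hcard : (Finset.image v Finset.univ).card = c := by
    rw [Finset.card_image_of_injective _ hv, Finset.card_univ, Fintype.card_fin]
  set S₀ : {s : Finset (Fin b) // s.card = c} := ⟨Finset.image v Finset.univ, hcard⟩ with hS₀
  have hmem : ∀ k, v k ∈ S₀.1 := fun k => Finset.mem_image.mpr ⟨k, Finset.mem_univ k, rfl⟩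
  have hu : Function.Injective
      (fun k => (S₀.1.orderIsoOfFin S₀.2).symm ⟨v k, hmem k⟩) := by
    intro a b hab
    have := (S₀.1.orderIsoOfFin S₀.2).symm.injective hab
    exact hv (congrArg Subtype.val this)
  let π : Equiv.Perm (Fin c) :=
    Equiv.ofBijective _ ((Finite.injective_iff_bijective).mp hu)
  have hvfact : ∀ k, v k = S₀.1.orderEmbOfFin S₀.2 (π k) := by
    intro k
    show v k = S₀.1.orderEmbOfFin S₀.2 ((S₀.1.orderIsoOfFin S₀.2).symm ⟨v k, hmem k⟩)
    rw [← Finset.coe_orderIsoOfFin_apply, OrderIso.apply_symm_apply]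
  have hfun : (fun k => Pi.basisFun F (Fin b) (v k))
      = (fun k => Pi.basisFun F (Fin b) (S₀.1.orderEmbOfFin S₀.2 k)) ∘ ⇑π := by
    funext k
    simp only [Function.comp_apply]
    rw [← hvfact k]
  rw [hfun, AlternatingMap.map_perm, AlternatingMap.sum_apply']
  have hterm : ∀ S : {s : Finset (Fin b) // s.card = c},
      (g (fun k => Pi.basisFun F (Fin b) (S.1.orderEmbOfFin S.2 k)) • coordAlt F S)
        ((fun k => Pi.basisFun F (Fin b) (S₀.1.orderEmbOfFin S₀.2 k)) ∘ ⇑π)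
      = if S = S₀ then
          Equiv.Perm.sign π • g (fun k => Pi.basisFun F (Fin b) (S₀.1.orderEmbOfFin S₀.2 k))
        else 0 := by
    intro S
    rw [AlternatingMap.smul_apply, AlternatingMap.map_perm, coordAlt_basis]
    split_ifs with h
    · subst h
      rcases Int.units_eq_one_or (Equiv.Perm.sign π) with hs | hs <;>
        simp [hs, smul_eq_mul, mul_comm]
    · simp
  rw [Finset.sum_congr rfl fun S _ => hterm S, Fintype.sum_ite_eq']
end Aux

/-- Let `F` be a field of odd prime characteristic `p` and let `A_b = F^b` carry the
permutation action of `S_b`.  If `1 < c ≤ b` then the `S_b`-fixed subspace of the `c`-th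
exterior power `⋀^c A_b` is zero, and if `c = 1` it is the line spanned by
`e_1 + ⋯ + e_b`. -/
theorem fixed_points_exterior_power_perm_module (p : ℕ) (hp : p.Prime) (hodd : p ≠ 2)
    [CharP F p] (b c : ℕ) (hb1 : 1 ≤ b) (hcb : c ≤ b) :
    (1 < c → {v : ExteriorAlgebra F (Fin b → F) |
        v ∈ ⋀[F]^c (Fin b → F) ∧
        ∀ σ : Equiv.Perm (Fin b), ExteriorAlgebra.map (permAction F b σ) v = v} = {0})
    ∧ (c = 1 → {v : ExteriorAlgebra F (Fin b → F) |
        v ∈ ⋀[F]^c (Fin b → F) ∧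
        ∀ σ : Equiv.Perm (Fin b), ExteriorAlgebra.map (permAction F b σ) v = v}
      = ↑(Submodule.span F
          {ExteriorAlgebra.ι F (fun _ : Fin b => (1 : F))})) := by
  constructor
  · intro hc
    ext v
    simp only [Set.mem_setOf_eq, Set.mem_singleton_iff]
    constructor
    · rintro ⟨hv, hfix⟩
      have h2ne : (2 : F) ≠ 0 := by
        intro h
        have h2 : ((2 : ℕ) : F) = 0 := by exact_mod_cast h
        exact hodd ((Nat.prime_dvd_prime_iff_eq hp Nat.prime_two).mp
          ((CharP.cast_eq_zero_iff F p 2).mp h2))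
      rw [← Module.forall_dual_apply_eq_zero_iff F v]
      intro φ
      let Φ : ((Fin b → F) [⋀^Fin c]→ₗ[F] F) →ₗ[F] F :=
        { toFun := fun g => liftAlternating (Pi.single c g) v
          map_add' := fun g₁ g₂ => by
            rw [Pi.single_add, map_add, LinearMap.add_apply]
          map_smul' := fun r g => by
            rw [Pi.single_smul, map_smul, LinearMap.smul_apply]
            rfl }
      have hΦzero : ∀ S : {s : Finset (Fin b) // s.card = c}, Φ (coordAlt F S) = 0 := by
        intro S
        obtain ⟨i, hi, j, hj, hij⟩ := Finset.one_lt_card.mp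
          (show 1 < S.1.card by rw [S.2]; exact hc)
        have hps : Pi.single c ((coordAlt F S).compLinearMap (permAction F b (Equiv.swap i j)))
            = fun i' => ((Pi.single c (coordAlt F S) :
                  ∀ i, (Fin b → F) [⋀^Fin i]→ₗ[F] F) i').compLinearMap
                (permAction F b (Equiv.swap i j)) := by
          funext i'
          rcases eq_or_ne i' c with rfl | hne
          · simp
          · rw [Pi.single_eq_of_ne hne, Pi.single_eq_of_ne hne]
            ext w
            simp
        have h1 : Φ ((coordAlt F S).compLinearMap (permAction F b (Equiv.swap i j)))
            = Φ (coordAlt F S) := by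
          have h' : liftAlternating (Pi.single c
                ((coordAlt F S).compLinearMap (permAction F b (Equiv.swap i j)))) v
              = liftAlternating (Pi.single c (coordAlt F S)) v := by
            rw [hps, ← liftAlternating_map_comp, hfix]
          exact h'
        rw [coordAlt_comp_swap F S hi hj hij, map_neg] at h1
        have h2 : (2 : F) * Φ (coordAlt F S) = 0 := by
          rw [two_mul]
          nth_rewrite 1 [← h1]
          rw [neg_add_cancel]
        rcases mul_eq_zero.mp h2 with h | h
        · exact absurd h h2ne
        · exact h
      have hφ' : liftAlternating (fun i => φ.compAlternatingMap (ιMulti F i)) = φ := by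
        have h := liftAlternatingEquiv.apply_symm_apply φ
        exact h
      have hrep : φ v = Φ (φ.compAlternatingMap (ιMulti F c)) := by
        conv_lhs => rw [← hφ']
        exact liftAlternating_single_of_mem F hv _
      rw [hrep, alt_expansion F (φ.compAlternatingMap (ιMulti F c)), map_sum]
      simp [map_smul, hΦzero]
    · rintro rfl
      exact ⟨Submodule.zero_mem _, fun σ => map_zero _⟩
  · intro hc
    subst hc
    ext v
    simp only [Set.mem_setOf_eq, SetLike.mem_coe]
    rw [Submodule.mem_span_singleton]
    constructor
    · rintro ⟨hv, hfix⟩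
      have hv' : v ∈ LinearMap.range (ExteriorAlgebra.ι F :
          (Fin b → F) →ₗ[F] ExteriorAlgebra F (Fin b → F)) ^ 1 := hv
      rw [pow_one] at hv'
      obtain ⟨x, rfl⟩ := hv'
      have hx : ∀ σ : Equiv.Perm (Fin b), x ∘ ⇑σ⁻¹ = x := by
        intro σ
        have h := hfix σ
        rw [map_apply_ι] at h
        exact ι_leftInverse.injective h
      have i₀ : Fin b := ⟨0, hb1⟩
      have hconst : ∀ i, x i = x (⟨0, hb1⟩ : Fin b) := by
        intro i
        have h := congrFun (hx (Equiv.swap i ⟨0, hb1⟩)) i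
        rw [Equiv.swap_inv] at h
        simpa [Equiv.swap_apply_left] using h.symm
      refine ⟨x ⟨0, hb1⟩, ?_⟩
      rw [← map_smul]
      congr 1
      funext i
      rw [Pi.smul_apply, smul_eq_mul, mul_one]
      exact (hconst i).symm
    · rintro ⟨r, rfl⟩
      refine ⟨?_, ?_⟩
      · have h1 : ExteriorAlgebra.ι F (fun _ : Fin b => (1 : F)) ∈ ⋀[F]^1 (Fin b → F) := by
          have hp1 : (⋀[F]^1 (Fin b → F)) = LinearMap.range (ExteriorAlgebra.ι F :
              (Fin b → F) →ₗ[F] ExteriorAlgebra F (Fin b → F)) := pow_one _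
          rw [hp1]
          exact LinearMap.mem_range_self _ _
        exact Submodule.smul_mem _ r h1
      · intro σ
        have hper : permAction F b σ (fun _ : Fin b => (1 : F)) = fun _ : Fin b => (1 : F) := rfl
        rw [map_smul, map_apply_ι, hper]
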